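/- Let j ≥ 0 be an integer and let w : ℝ² → ℝ be continuously differentiable. Suppose u₀ ∈ Q_j satisfies ∫_K (w − u₀) p dx dy = 0 for every p ∈ Q_j; suppose for each m ∈ {1,2,3,4} that u_{b,m} is a polynomial of degree ≤ j in the coordinate running along F_m with ∫_{F_m} (w − u_{b,m}) p ds = 0 for every univariate polynomial p of degree ≤ j; and suppose G ∈ RT_j(K) satisfies ∫_K G·q dx dy = −∫_K u₀ (div q) dx dy + Σ_{m=1}^{4} ∫_{F_m} u_{b,m} (q·n_m) ds for every q ∈ RT_j(K). Then ∫_K (G − ∇w)·q dx dy = 0 for every q ∈ RT_j(K); that is, G is the L² projection of ∇w onto RT_j(K). -/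

import Mathlib

open MeasureTheory MvPolynomial
noncomputable section

/-- Real polynomials in two variables. -/
abbrev Poly2 := MvPolynomial (Fin 2) ℝ

/-- Evaluate a two-variable polynomial at `(x, y)`. -/
def evalP (p : Poly2) (x y : ℝ) : ℝ := MvPolynomial.eval ![x, y] p

/-- `Q_{r,s}`: degree `≤ r` in the first variable and `≤ s` in the second. -/
def memQ (r s : ℕ) (p : Poly2) : Prop := p.degreeOf 0 ≤ r ∧ p.degreeOf 1 ≤ s

/-- The divergence of a polynomial vector field. -/
def divP (q : Poly2 × Poly2) : Poly2 := pderiv 0 q.1 + pderiv 1 q.2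

/-- The Raviart–Thomas space `RT_j(K) = Q_{j+1,j} × Q_{j,j+1}`. -/
def memRT (j : ℕ) (q : Poly2 × Poly2) : Prop := memQ (j+1) j q.1 ∧ memQ j (j+1) q.2

/-! ### Auxiliary lemmas about `evalP` -/

@[simp] lemma evalP_add (p q : Poly2) (x y : ℝ) : evalP (p + q) x y = evalP p x y + evalP q x y := by
  simp [evalP]
@[simp] lemma evalP_mul (p q : Poly2) (x y : ℝ) : evalP (p * q) x y = evalP p x y * evalP q x y := by
  simp [evalP]
@[simp] lemma evalP_C (a : ℝ) (x y : ℝ) : evalP (C a) x y = a := by simp [evalP]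
@[simp] lemma evalP_zero (x y : ℝ) : evalP 0 x y = 0 := by simp [evalP]

lemma continuous_evalP (p : Poly2) : Continuous fun z : ℝ × ℝ => evalP p z.1 z.2 := by
  have h : Continuous fun z : ℝ × ℝ => (![z.1, z.2] : Fin 2 → ℝ) := by
    refine continuous_pi fun i => ?_
    fin_cases i <;> simp <;> [exact continuous_fst; exact continuous_snd]
  exact (MvPolynomial.continuous_eval (p := p)).comp h

/-! ### The formal derivative matches the analytic derivative -/

def pCLM (p : Poly2) (z : ℝ × ℝ) : ℝ × ℝ →L[ℝ] ℝ :=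
  evalP (pderiv 0 p) z.1 z.2 • ContinuousLinearMap.fst ℝ ℝ ℝ +
  evalP (pderiv 1 p) z.1 z.2 • ContinuousLinearMap.snd ℝ ℝ ℝ

@[simp] lemma pCLM_apply (p : Poly2) (z v : ℝ × ℝ) :
    pCLM p z v = evalP (pderiv 0 p) z.1 z.2 * v.1 + evalP (pderiv 1 p) z.1 z.2 * v.2 := by
  simp [pCLM, smul_eq_mul]

lemma hasFDerivAt_evalP (p : Poly2) (z : ℝ × ℝ) :
    HasFDerivAt (fun z : ℝ × ℝ => evalP p z.1 z.2) (pCLM p z) z := by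
  induction p using MvPolynomial.induction_on with
  | C a =>
    have h1 : (fun z : ℝ × ℝ => evalP (C a) z.1 z.2) = fun _ => a := by
      funext z; simp [evalP]
    rw [h1]
    have h0 : pCLM (C a) z = 0 := by
      ext v <;> simp [pCLM, pderiv_C, evalP]
    rw [h0]; exact hasFDerivAt_const _ _
  | add p q hp hq =>
    have h1 : (fun z : ℝ × ℝ => evalP (p + q) z.1 z.2)
        = fun z : ℝ × ℝ => evalP p z.1 z.2 + evalP q z.1 z.2 := by
      funext z; simp [evalP]
    rw [h1]
    have h0 : pCLM (p + q) z = pCLM p z + pCLM q z := by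
      ext v <;> simp [evalP] <;> ring
    rw [h0]; exact hp.add hq
  | mul_X p i hp =>
    fin_cases i
    · show HasFDerivAt (fun z : ℝ × ℝ => evalP (p * X 0) z.1 z.2) (pCLM (p * X 0) z) z
      have h1 : (fun z : ℝ × ℝ => evalP (p * X 0) z.1 z.2)
          = fun z : ℝ × ℝ => evalP p z.1 z.2 * z.1 := by
        funext z; simp [evalP]
      rw [h1]
      have h := hp.mul hasFDerivAt_fst
      convert h using 1 <;> try rfl
      ext v <;> simp [evalP, pderiv_mul, smul_eq_mul] <;> ring
    · show HasFDerivAt (fun z : ℝ × ℝ => evalP (p * X 1) z.1 z.2) (pCLM (p * X 1) z) z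
      have h1 : (fun z : ℝ × ℝ => evalP (p * X 1) z.1 z.2)
          = fun z : ℝ × ℝ => evalP p z.1 z.2 * z.2 := by
        funext z; simp [evalP]
      rw [h1]
      have h := hp.mul hasFDerivAt_snd
      convert h using 1 <;> try rfl
      ext v <;> simp [evalP, pderiv_mul, smul_eq_mul] <;> ring

/-! ### Degree lemmas -/

lemma degreeOf_monomial_le (i : Fin 2) (m : Fin 2 →₀ ℕ) (a : ℝ) :
    degreeOf i (monomial m a) ≤ m i := by
  classical
  rcases eq_or_ne a 0 with rfl | ha
  · simp
  · rw [degreeOf_monomial_eq m i ha]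

lemma degreeOf_pderiv_le (p : Poly2) (i k : Fin 2) {n : ℕ}
    (h : ∀ m ∈ p.support, m i - Finsupp.single k 1 i ≤ n) :
    degreeOf i (pderiv k p) ≤ n := by
  classical
  conv_lhs => rw [p.as_sum]
  rw [map_sum]
  refine le_trans (degreeOf_sum_le _ _ _) ?_
  rw [Finset.sup_le_iff]
  intro m hm
  rw [pderiv_monomial]
  refine le_trans (degreeOf_monomial_le _ _ _) ?_
  have := h m hm
  simpa [Finsupp.tsub_apply] using this

lemma degreeOf_pderiv_same (p : Poly2) (k : Fin 2) {n : ℕ} (h : degreeOf k p ≤ n + 1) :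
    degreeOf k (pderiv k p) ≤ n := by
  classical
  refine degreeOf_pderiv_le p k k fun m hm => ?_
  have := monomial_le_degreeOf k hm
  simp only [Finsupp.single_eq_same]
  omega

lemma degreeOf_pderiv_other (p : Poly2) {i k : Fin 2} (hik : i ≠ k) {n : ℕ}
    (h : degreeOf i p ≤ n) : degreeOf i (pderiv k p) ≤ n := by
  classical
  refine degreeOf_pderiv_le p i k fun m hm => ?_
  have := monomial_le_degreeOf i hm
  omega

lemma memQ_divP {j : ℕ} {q : Poly2 × Poly2} (hq : memRT j q) : memQ j j (divP q) := by
  obtain ⟨⟨h10, h11⟩, ⟨h20, h21⟩⟩ := hq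
  constructor
  · refine le_trans (degreeOf_add_le _ _ _) (max_le ?_ ?_)
    · exact degreeOf_pderiv_same q.1 0 h10
    · exact degreeOf_pderiv_other q.2 (by decide) h20
  · refine le_trans (degreeOf_add_le _ _ _) (max_le ?_ ?_)
    · exact degreeOf_pderiv_other q.1 (by decide) h11
    · exact degreeOf_pderiv_same q.2 1 h21

/-! ### Edge restrictions as univariate polynomials -/

def pY (p : Poly2) (x : ℝ) : Polynomial ℝ := eval₂ Polynomial.C ![Polynomial.C x, Polynomial.X] p
def pX (p : Poly2) (y : ℝ) : Polynomial ℝ := eval₂ Polynomial.C ![Polynomial.X, Polynomial.C y] p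

lemma pY_eval (p : Poly2) (x y : ℝ) : (pY p x).eval y = evalP p x y := by
  induction p using MvPolynomial.induction_on with
  | C a => simp [pY, evalP]
  | add p q hp hq => simp [pY, evalP, eval₂_add] at *; simp [hp, hq]
  | mul_X p i hp =>
    fin_cases i <;> simp [pY, evalP, eval₂_mul] at * <;> simp [hp]

lemma pX_eval (p : Poly2) (x y : ℝ) : (pX p y).eval x = evalP p x y := by
  induction p using MvPolynomial.induction_on with
  | C a => simp [pX, evalP]
  | add p q hp hq => simp [pX, evalP, eval₂_add] at *; simp [hp, hq]
  | mul_X p i hp =>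
    fin_cases i <;> simp [pX, evalP, eval₂_mul] at * <;> simp [hp]

lemma pY_natDegree (p : Poly2) (x : ℝ) {n : ℕ} (h : degreeOf 1 p ≤ n) :
    (pY p x).natDegree ≤ n := by
  rw [pY, eval₂_eq']
  refine Polynomial.natDegree_sum_le_of_forall_le _ _ fun m hm => ?_
  have hle : m 1 ≤ n := le_trans (monomial_le_degreeOf 1 hm) h
  calc (Polynomial.C (coeff m p) * ∏ i : Fin 2, ![Polynomial.C x, Polynomial.X] i ^ m i).natDegree
      ≤ _ + _ := Polynomial.natDegree_mul_le
    _ ≤ n := by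
        simp only [Polynomial.natDegree_C, zero_add, Fin.prod_univ_two]
        simp only [Matrix.cons_val_zero, Matrix.cons_val_one, Matrix.head_cons]
        refine le_trans Polynomial.natDegree_mul_le ?_
        simp [Polynomial.natDegree_pow]
        exact hle

lemma pX_natDegree (p : Poly2) (y : ℝ) {n : ℕ} (h : degreeOf 0 p ≤ n) :
    (pX p y).natDegree ≤ n := by
  rw [pX, eval₂_eq']
  refine Polynomial.natDegree_sum_le_of_forall_le _ _ fun m hm => ?_
  have hle : m 0 ≤ n := le_trans (monomial_le_degreeOf 0 hm) h
  calc (Polynomial.C (coeff m p) * ∏ i : Fin 2, ![Polynomial.X, Polynomial.C y] i ^ m i).natDegree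
      ≤ _ + _ := Polynomial.natDegree_mul_le
    _ ≤ n := by
        simp only [Polynomial.natDegree_C, zero_add, Fin.prod_univ_two]
        simp only [Matrix.cons_val_zero, Matrix.cons_val_one, Matrix.head_cons]
        refine le_trans Polynomial.natDegree_mul_le ?_
        simp [Polynomial.natDegree_pow]
        exact hle

/-- If `u₀` is the `L²(K)`-projection of `w` onto `Q_j`, each `u_{b,m}` is the
`L²(F_m)`-projection of `w` onto polynomials of degree `≤ j` on the edge `F_m`, and
`G ∈ RT_j(K)` is the associated discrete weak gradient, then `G` is the `L²`-projection of
`∇w` onto `RT_j(K)`. -/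
theorem statement2 (j : ℕ) (x₀ x₁ y₀ y₁ : ℝ) (hx : x₀ < x₁) (hy : y₀ < y₁)
    (w : ℝ × ℝ → ℝ) (hw : ContDiff ℝ 1 w)
    (u₀ : Poly2) (hu₀ : memQ j j u₀)
    (hu₀proj : ∀ p : Poly2, memQ j j p →
      (∫ z in Set.Icc x₀ x₁ ×ˢ Set.Icc y₀ y₁, (w z - evalP u₀ z.1 z.2) * evalP p z.1 z.2) = 0)
    (ub₁ ub₂ ub₃ ub₄ : Polynomial ℝ)
    (hb₁ : ub₁.natDegree ≤ j) (hb₂ : ub₂.natDegree ≤ j)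
    (hb₃ : ub₃.natDegree ≤ j) (hb₄ : ub₄.natDegree ≤ j)
    (hub₁ : ∀ p : Polynomial ℝ, p.natDegree ≤ j →
      (∫ y in y₀..y₁, (w (x₀, y) - ub₁.eval y) * p.eval y) = 0)
    (hub₂ : ∀ p : Polynomial ℝ, p.natDegree ≤ j →
      (∫ y in y₀..y₁, (w (x₁, y) - ub₂.eval y) * p.eval y) = 0)
    (hub₃ : ∀ p : Polynomial ℝ, p.natDegree ≤ j →
      (∫ x in x₀..x₁, (w (x, y₀) - ub₃.eval x) * p.eval x) = 0)
    (hub₄ : ∀ p : Polynomial ℝ, p.natDegree ≤ j →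
      (∫ x in x₀..x₁, (w (x, y₁) - ub₄.eval x) * p.eval x) = 0)
    (G : Poly2 × Poly2) (hG : memRT j G)
    (hGdef : ∀ q : Poly2 × Poly2, memRT j q →
      (∫ z in Set.Icc x₀ x₁ ×ˢ Set.Icc y₀ y₁,
        (evalP G.1 z.1 z.2 * evalP q.1 z.1 z.2 + evalP G.2 z.1 z.2 * evalP q.2 z.1 z.2))
      = -(∫ z in Set.Icc x₀ x₁ ×ˢ Set.Icc y₀ y₁, evalP u₀ z.1 z.2 * evalP (divP q) z.1 z.2)
        + ((∫ y in y₀..y₁, ub₁.eval y * (-(evalP q.1 x₀ y)))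
          + (∫ y in y₀..y₁, ub₂.eval y * evalP q.1 x₁ y)
          + (∫ x in x₀..x₁, ub₃.eval x * (-(evalP q.2 x y₀)))
          + (∫ x in x₀..x₁, ub₄.eval x * evalP q.2 x y₁))) :
    ∀ q : Poly2 × Poly2, memRT j q →
      (∫ z in Set.Icc x₀ x₁ ×ˢ Set.Icc y₀ y₁,
        ((evalP G.1 z.1 z.2 - fderiv ℝ w z (1, 0)) * evalP q.1 z.1 z.2
          + (evalP G.2 z.1 z.2 - fderiv ℝ w z (0, 1)) * evalP q.2 z.1 z.2)) = 0 := by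
  intro q hq
  have hKe : (Set.Icc x₀ x₁ ×ˢ Set.Icc y₀ y₁ : Set (ℝ × ℝ)) = Set.Icc (x₀, y₀) (x₁, y₁) :=
    Set.Icc_prod_Icc x₀ x₁ y₀ y₁
  have hKc : IsCompact (Set.Icc (x₀, y₀) (x₁, y₁) : Set (ℝ × ℝ)) := isCompact_Icc
  -- continuity facts
  have cw : Continuous w := hw.continuous
  have cdw : Continuous fun z : ℝ × ℝ => fderiv ℝ w z := hw.continuous_fderiv one_ne_zero
  have c10 : Continuous fun z : ℝ × ℝ => fderiv ℝ w z (1, 0) := cdw.clm_apply continuous_const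
  have c01 : Continuous fun z : ℝ × ℝ => fderiv ℝ w z (0, 1) := cdw.clm_apply continuous_const
  have hInt : ∀ {h : ℝ × ℝ → ℝ}, Continuous h → IntegrableOn h (Set.Icc (x₀, y₀) (x₁, y₁)) :=
    fun hc => hc.continuousOn.integrableOn_compact hKc
  -- divergence theorem for (w q₁, w q₂)
  have hdF : ∀ z : ℝ × ℝ, HasFDerivAt (fun z : ℝ × ℝ => w z * evalP q.1 z.1 z.2)
      (w z • pCLM q.1 z + evalP q.1 z.1 z.2 • fderiv ℝ w z) z := fun z =>
    ((hw.differentiable one_ne_zero z).hasFDerivAt).mul (hasFDerivAt_evalP q.1 z)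
  have hdG : ∀ z : ℝ × ℝ, HasFDerivAt (fun z : ℝ × ℝ => w z * evalP q.2 z.1 z.2)
      (w z • pCLM q.2 z + evalP q.2 z.1 z.2 • fderiv ℝ w z) z := fun z =>
    ((hw.differentiable one_ne_zero z).hasFDerivAt).mul (hasFDerivAt_evalP q.2 z)
  have hkey : ∀ z : ℝ × ℝ,
      (w z • pCLM q.1 z + evalP q.1 z.1 z.2 • fderiv ℝ w z) (1, 0)
        + (w z • pCLM q.2 z + evalP q.2 z.1 z.2 • fderiv ℝ w z) (0, 1)
      = w z * evalP (divP q) z.1 z.2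
        + (fderiv ℝ w z (1, 0) * evalP q.1 z.1 z.2 + fderiv ℝ w z (0, 1) * evalP q.2 z.1 z.2) := by
    intro z
    simp [divP, ContinuousLinearMap.add_apply, ContinuousLinearMap.smul_apply, smul_eq_mul]
    ring
  have cWD : Continuous fun z : ℝ × ℝ => w z * evalP (divP q) z.1 z.2 :=
    cw.mul (continuous_evalP (divP q))
  have cGrad : Continuous fun z : ℝ × ℝ =>
      fderiv ℝ w z (1, 0) * evalP q.1 z.1 z.2 + fderiv ℝ w z (0, 1) * evalP q.2 z.1 z.2 :=
    (c10.mul (continuous_evalP q.1)).add (c01.mul (continuous_evalP q.2))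
  have Hi : IntegrableOn (fun z : ℝ × ℝ =>
      (w z • pCLM q.1 z + evalP q.1 z.1 z.2 • fderiv ℝ w z) (1, 0)
        + (w z • pCLM q.2 z + evalP q.2 z.1 z.2 • fderiv ℝ w z) (0, 1))
      (Set.Icc (x₀, y₀) (x₁, y₁)) := by
    have := funext hkey
    rw [this]
    exact hInt (cWD.add cGrad)
  have hdiv := integral_divergence_prod_Icc_of_hasFDerivAt_off_countable_of_le
    (fun z : ℝ × ℝ => w z * evalP q.1 z.1 z.2) (fun z : ℝ × ℝ => w z * evalP q.2 z.1 z.2)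
    (fun z => w z • pCLM q.1 z + evalP q.1 z.1 z.2 • fderiv ℝ w z)
    (fun z => w z • pCLM q.2 z + evalP q.2 z.1 z.2 • fderiv ℝ w z)
    (x₀, y₀) (x₁, y₁) ⟨hx.le, hy.le⟩ ∅ Set.countable_empty
    (cw.mul (continuous_evalP q.1)).continuousOn
    (cw.mul (continuous_evalP q.2)).continuousOn
    (fun z _ => hdF z) (fun z _ => hdG z) Hi
  rw [funext hkey] at hdiv
  rw [integral_add (hInt cWD) (hInt cGrad)] at hdiv
  dsimp only at hdiv
  -- hdiv : Iw + Igrad = ((E4 - E3) + E2) - E1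
  -- interior projection
  have hdq : memQ j j (divP q) := memQ_divP hq
  have h0 := hu₀proj (divP q) hdq
  rw [hKe] at h0
  have h0' : (∫ z in Set.Icc (x₀, y₀) (x₁, y₁), w z * evalP (divP q) z.1 z.2)
      = ∫ z in Set.Icc (x₀, y₀) (x₁, y₁), evalP u₀ z.1 z.2 * evalP (divP q) z.1 z.2 := by
    have hsplit : (fun z : ℝ × ℝ => (w z - evalP u₀ z.1 z.2) * evalP (divP q) z.1 z.2)
        = fun z : ℝ × ℝ => w z * evalP (divP q) z.1 z.2
            - evalP u₀ z.1 z.2 * evalP (divP q) z.1 z.2 := by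
      funext z; ring
    rw [hsplit, integral_sub (hInt cWD) (hInt (h := fun z : ℝ × ℝ => evalP u₀ z.1 z.2 * evalP (divP q) z.1 z.2) ((continuous_evalP u₀).mul (continuous_evalP (divP q))))] at h0
    linarith
  -- edge projections
  have cq1 := continuous_evalP q.1
  have cq2 := continuous_evalP q.2
  have hE1 : (∫ y in y₀..y₁, ub₁.eval y * evalP q.1 x₀ y)
      = ∫ y in y₀..y₁, w (x₀, y) * evalP q.1 x₀ y := by
    have h1 := hub₁ (pY q.1 x₀) (pY_natDegree q.1 x₀ hq.1.2)
    simp only [pY_eval] at h1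
    have hiw : IntervalIntegrable (fun y => w (x₀, y) * evalP q.1 x₀ y) volume y₀ y₁ :=
      ((cw.comp (Continuous.prodMk_right x₀)).mul (cq1.comp (Continuous.prodMk_right x₀))).intervalIntegrable _ _
    have hiu : IntervalIntegrable (fun y => ub₁.eval y * evalP q.1 x₀ y) volume y₀ y₁ :=
      (ub₁.continuous.mul (cq1.comp (Continuous.prodMk_right x₀))).intervalIntegrable _ _
    have hsplit : (fun y => (w (x₀, y) - ub₁.eval y) * evalP q.1 x₀ y)
        = fun y => w (x₀, y) * evalP q.1 x₀ y - ub₁.eval y * evalP q.1 x₀ y := by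
      funext z; ring
    rw [hsplit, intervalIntegral.integral_sub hiw hiu] at h1
    linarith
  have hE2 : (∫ y in y₀..y₁, ub₂.eval y * evalP q.1 x₁ y)
      = ∫ y in y₀..y₁, w (x₁, y) * evalP q.1 x₁ y := by
    have h1 := hub₂ (pY q.1 x₁) (pY_natDegree q.1 x₁ hq.1.2)
    simp only [pY_eval] at h1
    have hiw : IntervalIntegrable (fun y => w (x₁, y) * evalP q.1 x₁ y) volume y₀ y₁ :=
      ((cw.comp (Continuous.prodMk_right x₁)).mul (cq1.comp (Continuous.prodMk_right x₁))).intervalIntegrable _ _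
    have hiu : IntervalIntegrable (fun y => ub₂.eval y * evalP q.1 x₁ y) volume y₀ y₁ :=
      (ub₂.continuous.mul (cq1.comp (Continuous.prodMk_right x₁))).intervalIntegrable _ _
    have hsplit : (fun y => (w (x₁, y) - ub₂.eval y) * evalP q.1 x₁ y)
        = fun y => w (x₁, y) * evalP q.1 x₁ y - ub₂.eval y * evalP q.1 x₁ y := by
      funext z; ring
    rw [hsplit, intervalIntegral.integral_sub hiw hiu] at h1
    linarith
  have cx0 : Continuous fun x : ℝ => (x, y₀) := continuous_id.prodMk continuous_const
  have cx1 : Continuous fun x : ℝ => (x, y₁) := continuous_id.prodMk continuous_const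
  have hE3 : (∫ x in x₀..x₁, ub₃.eval x * evalP q.2 x y₀)
      = ∫ x in x₀..x₁, w (x, y₀) * evalP q.2 x y₀ := by
    have h1 := hub₃ (pX q.2 y₀) (pX_natDegree q.2 y₀ hq.2.1)
    simp only [pX_eval] at h1
    have hiw : IntervalIntegrable (fun x => w (x, y₀) * evalP q.2 x y₀) volume x₀ x₁ :=
      ((cw.comp cx0).mul (cq2.comp cx0)).intervalIntegrable _ _
    have hiu : IntervalIntegrable (fun x => ub₃.eval x * evalP q.2 x y₀) volume x₀ x₁ :=
      (ub₃.continuous.mul (cq2.comp cx0)).intervalIntegrable _ _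
    have hsplit : (fun x => (w (x, y₀) - ub₃.eval x) * evalP q.2 x y₀)
        = fun x => w (x, y₀) * evalP q.2 x y₀ - ub₃.eval x * evalP q.2 x y₀ := by
      funext z; ring
    rw [hsplit, intervalIntegral.integral_sub hiw hiu] at h1
    linarith
  have hE4 : (∫ x in x₀..x₁, ub₄.eval x * evalP q.2 x y₁)
      = ∫ x in x₀..x₁, w (x, y₁) * evalP q.2 x y₁ := by
    have h1 := hub₄ (pX q.2 y₁) (pX_natDegree q.2 y₁ hq.2.1)
    simp only [pX_eval] at h1
    have hiw : IntervalIntegrable (fun x => w (x, y₁) * evalP q.2 x y₁) volume x₀ x₁ :=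
      ((cw.comp cx1).mul (cq2.comp cx1)).intervalIntegrable _ _
    have hiu : IntervalIntegrable (fun x => ub₄.eval x * evalP q.2 x y₁) volume x₀ x₁ :=
      (ub₄.continuous.mul (cq2.comp cx1)).intervalIntegrable _ _
    have hsplit : (fun x => (w (x, y₁) - ub₄.eval x) * evalP q.2 x y₁)
        = fun x => w (x, y₁) * evalP q.2 x y₁ - ub₄.eval x * evalP q.2 x y₁ := by
      funext z; ring
    rw [hsplit, intervalIntegral.integral_sub hiw hiu] at h1
    linarith
  -- assemble
  have hGq := hGdef q hq
  rw [hKe] at hGq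
  have hneg1 : (∫ y in y₀..y₁, ub₁.eval y * (-(evalP q.1 x₀ y)))
      = -(∫ y in y₀..y₁, ub₁.eval y * evalP q.1 x₀ y) := by
    rw [← intervalIntegral.integral_neg]
    congr 1; funext y; ring
  have hneg3 : (∫ x in x₀..x₁, ub₃.eval x * (-(evalP q.2 x y₀)))
      = -(∫ x in x₀..x₁, ub₃.eval x * evalP q.2 x y₀) := by
    rw [← intervalIntegral.integral_neg]
    congr 1; funext y; ring
  rw [hneg1, hneg3, hE1, hE2, hE3, hE4, ← h0'] at hGq
  -- final goal
  rw [hKe]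
  have hgoal : (fun z : ℝ × ℝ =>
      (evalP G.1 z.1 z.2 - fderiv ℝ w z (1, 0)) * evalP q.1 z.1 z.2
        + (evalP G.2 z.1 z.2 - fderiv ℝ w z (0, 1)) * evalP q.2 z.1 z.2)
      = fun z : ℝ × ℝ =>
        (evalP G.1 z.1 z.2 * evalP q.1 z.1 z.2 + evalP G.2 z.1 z.2 * evalP q.2 z.1 z.2)
          - (fderiv ℝ w z (1, 0) * evalP q.1 z.1 z.2 + fderiv ℝ w z (0, 1) * evalP q.2 z.1 z.2) := by
    funext z; ring
  rw [hgoal, integral_sub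
    (hInt (h := fun z : ℝ × ℝ => evalP G.1 z.1 z.2 * evalP q.1 z.1 z.2 + evalP G.2 z.1 z.2 * evalP q.2 z.1 z.2) (((continuous_evalP G.1).mul (continuous_evalP q.1)).add
      ((continuous_evalP G.2).mul (continuous_evalP q.2))))
    (hInt cGrad)]
  linarith [hdiv, hGq]
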